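/- For every perfect binary tree T of height h, ψ_q(T) = (2^{h+2}/3) · (1 − (1/4)^{⌊h/2⌋+1}). -/

import Mathlib

open Finset SimpleGraph
open scoped Classical

/-- The closed neighborhood `N[v]` of `v` in `G`, as a finset. -/
noncomputable def closedNbhd {V : Type*} [Fintype V] (G : SimpleGraph V) (v : V) : Finset V :=
  Finset.univ.filter fun u => u = v ∨ G.Adj u v

/-- The degree of `v` in `G`. -/
noncomputable def deg {V : Type*} [Fintype V] (G : SimpleGraph V) (v : V) : ℕ :=
  (Finset.univ.filter fun u => G.Adj v u).card

/-- A coloring `c` is a quorum coloring if every vertex has at least half of its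
closed neighborhood in its own color class. -/
noncomputable def IsQuorumColoring {V : Type*} [Fintype V] (G : SimpleGraph V) (c : V → ℕ) : Prop :=
  ∀ v : V, (closedNbhd G v).card ≤ 2 * ((closedNbhd G v).filter fun u => c u = c v).card

/-- Number of color classes (distinct used colors) of a coloring. -/
noncomputable def numClasses {V : Type*} [Fintype V] (c : V → ℕ) : ℕ :=
  (Finset.univ.image c).card

/-- The quorum coloring number `ψ_q(G)`. -/
noncomputable def quorumNumber {V : Type*} [Fintype V] (G : SimpleGraph V) : ℕ :=
  sSup {k | ∃ c : V → ℕ, IsQuorumColoring G c ∧ numClasses c = k}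

/-- A coloring is cost-effective if every vertex meets the quorum bound with equality:
`|N[v] ∩ π(v)| = ⌈|N[v]|/2⌉`. -/
noncomputable def IsCostEffective {V : Type*} [Fintype V] (G : SimpleGraph V) (c : V → ℕ) : Prop :=
  ∀ v : V, ((closedNbhd G v).filter fun u => c u = c v).card = ((closedNbhd G v).card + 1) / 2

/-- The matching number of a graph: the largest number of edges in a matching. -/
noncomputable def matchingNumber {W : Type*} (H : SimpleGraph W) : ℕ :=
  sSup {k | ∃ M : H.Subgraph, M.IsMatching ∧ M.edgeSet.ncard = k}


section Tree
variable {V : Type*} [Fintype V] {G : SimpleGraph V} {r : V}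

/-- In a tree, every path has length equal to the distance between endpoints. -/
lemma path_len (hT : G.IsTree) {u v : V} (p : G.Walk u v) (hp : p.IsPath) :
    p.length = G.dist u v := by
  obtain ⟨q, hq⟩ := (hT.isConnected.preconnected u v).exists_walk_length_eq_dist
  have hq' : q.bypass.IsPath := q.bypass_isPath
  have h1 : q.bypass.length ≤ G.dist u v := hq ▸ q.length_bypass_le
  have h2 : G.dist u v ≤ q.bypass.length := G.dist_le _
  have := (hT.existsUnique_path u v).unique hp hq'
  rw [this]; omega

set_option linter.unusedSectionVars false

lemma support_dist (hT : G.IsTree) {u v w : V} (p : G.Walk u v) (hp : p.IsPath)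
    (hw : w ∈ p.support) : G.dist u w + ((p.dropUntil w hw).length) = p.length := by
  have h1 : (p.takeUntil w hw).length = G.dist u w :=
    path_len hT _ (hp.takeUntil hw)
  have := congrArg Walk.length (p.take_spec hw)
  rw [Walk.length_append, h1] at this
  omega

lemma adj_dist (hT : G.IsTree) {u v : V} (huv : G.Adj u v) :
    G.dist r u + 1 = G.dist r v ∨ G.dist r v + 1 = G.dist r u := by
  have h1 : G.dist r u ≤ G.dist r v + 1 := by
    have := hT.isConnected.dist_triangle (u := r) (v := v) (w := u)
    have h2 : G.dist v u = 1 := dist_eq_one_iff_adj.mpr huv.symm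
    omega
  have h2 : G.dist r v ≤ G.dist r u + 1 := by
    have := hT.isConnected.dist_triangle (u := r) (v := u) (w := v)
    have h2 : G.dist u v = 1 := dist_eq_one_iff_adj.mpr huv
    omega
  -- rule out equality
  rcases Nat.lt_trichotomy (G.dist r u) (G.dist r v) with hlt | heq | hgt
  · left; omega
  · exfalso
    obtain ⟨q, hq⟩ := (hT.isConnected.preconnected r u).exists_walk_length_eq_dist
    have hq' : q.bypass.IsPath := q.bypass_isPath
    have hlen : q.bypass.length = G.dist r u := path_len hT _ hq'
    by_cases hv : v ∈ q.bypass.support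
    · have := support_dist hT q.bypass hq' hv
      have hd0 : (q.bypass.dropUntil v hv).length = 0 := by omega
      have := Walk.eq_of_length_eq_zero hd0
      exact G.ne_of_adj huv this.symm
    · have hP : (q.bypass.concat huv).IsPath := by
        rw [Walk.isPath_def, Walk.support_concat, ← List.concat_eq_append]
        exact List.Nodup.concat (by simpa using hv) ((Walk.isPath_def _).1 hq')
      have := path_len hT _ hP
      rw [Walk.length_concat] at this
      omega
  · right; omega

lemma parent_unique (hT : G.IsTree) {v u₁ u₂ : V}
    (h₁ : G.Adj u₁ v ∧ G.dist r u₁ + 1 = G.dist r v)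
    (h₂ : G.Adj u₂ v ∧ G.dist r u₂ + 1 = G.dist r v) : u₁ = u₂ := by
  obtain ⟨q₁, hq₁⟩ := (hT.isConnected.preconnected r u₁).exists_walk_length_eq_dist
  obtain ⟨q₂, hq₂⟩ := (hT.isConnected.preconnected r u₂).exists_walk_length_eq_dist
  have hp₁ : q₁.bypass.IsPath := q₁.bypass_isPath
  have hp₂ : q₂.bypass.IsPath := q₂.bypass_isPath
  have hl₁ : q₁.bypass.length = G.dist r u₁ := path_len hT _ hp₁
  have hl₂ : q₂.bypass.length = G.dist r u₂ := path_len hT _ hp₂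
  have hv₁ : v ∉ q₁.bypass.support := by
    intro hv
    have := support_dist hT q₁.bypass hp₁ hv
    have : G.dist r v ≤ G.dist r u₁ := by omega
    omega
  have hv₂ : v ∉ q₂.bypass.support := by
    intro hv
    have := support_dist hT q₂.bypass hp₂ hv
    have : G.dist r v ≤ G.dist r u₂ := by omega
    omega
  have hP₁ : (q₁.bypass.concat h₁.1).IsPath := by
    rw [Walk.isPath_def, Walk.support_concat, ← List.concat_eq_append]
    exact List.Nodup.concat (by simpa using hv₁) ((Walk.isPath_def _).1 hp₁)
  have hP₂ : (q₂.bypass.concat h₂.1).IsPath := by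
    rw [Walk.isPath_def, Walk.support_concat, ← List.concat_eq_append]
    exact List.Nodup.concat (by simpa using hv₂) ((Walk.isPath_def _).1 hp₂)
  have heq := (hT.existsUnique_path r v).unique hP₁ hP₂
  obtain ⟨hv, -⟩ := Walk.concat_inj heq
  exact hv

/-- The parent of `v` (junk if `v = r`). -/
noncomputable def par (G : SimpleGraph V) (r v : V) : V :=
  haveI : Nonempty V := ⟨v⟩
  Classical.epsilon fun u => G.Adj u v ∧ G.dist r u + 1 = G.dist r v

/-- The children of `v`. -/
noncomputable def kids (G : SimpleGraph V) (r v : V) : Finset V :=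
  Finset.univ.filter fun u => G.Adj v u ∧ G.dist r u = G.dist r v + 1

lemma dist_zero_iff (hT : G.IsTree) {v : V} : G.dist r v = 0 ↔ v = r := by
  rw [SimpleGraph.Connected.dist_eq_zero_iff hT.isConnected]
  exact eq_comm

lemma parent_exists (hT : G.IsTree) {v : V} (hv : v ≠ r) :
    ∃ u, G.Adj u v ∧ G.dist r u + 1 = G.dist r v := by
  obtain ⟨w, hw⟩ := (hT.isConnected.preconnected r v).exists_walk_length_eq_dist
  have hd : 0 < G.dist r v := by
    rcases Nat.eq_zero_or_pos (G.dist r v) with h0 | h0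
    · exact absurd ((dist_zero_iff hT).1 h0) hv
    · exact h0
  rcases hrev : w.reverse with _ | ⟨hadj, q⟩
  · exfalso
    have : w = Walk.nil.reverse := by rw [← hrev, Walk.reverse_reverse]
    rw [this] at hw; simp at hw; simp at hd
  · rename_i u
    refine ⟨u, hadj.symm, ?_⟩
    have hlen : q.length + 1 = G.dist r v := by
      have := congrArg Walk.length hrev
      rw [Walk.length_reverse] at this
      simp only [Walk.length_cons] at this
      omega
    have hle : G.dist r u ≤ q.length := by
      have := G.dist_le q.reverse
      rwa [Walk.length_reverse] at this
    rcases adj_dist (r := r) hT (hadj.symm : G.Adj u v) with h | h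
    · exact h
    · omega

lemma par_spec (hT : G.IsTree) {v : V} (hv : v ≠ r) :
    G.Adj (par G r v) v ∧ G.dist r (par G r v) + 1 = G.dist r v := by
  haveI : Nonempty V := ⟨v⟩
  exact Classical.epsilon_spec (parent_exists hT hv)

lemma par_eq (hT : G.IsTree) {v u : V} (hu : G.Adj u v ∧ G.dist r u + 1 = G.dist r v) :
    par G r v = u := by
  have hv : v ≠ r := by
    intro hvr; subst hvr
    have := hu.2
    rw [(dist_zero_iff hT).2 rfl] at this
    omega
  exact parent_unique hT (par_spec hT hv) hu

lemma mem_kids {v u : V} : u ∈ kids G r v ↔ G.Adj v u ∧ G.dist r u = G.dist r v + 1 := by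
  simp [kids]

lemma par_of_kid (hT : G.IsTree) {v u : V} (hu : u ∈ kids G r v) : par G r u = v := by
  rw [mem_kids] at hu
  exact par_eq hT ⟨hu.1, by omega⟩

lemma mem_kids_par (hT : G.IsTree) {v : V} (hv : v ≠ r) : v ∈ kids G r (par G r v) := by
  obtain ⟨h1, h2⟩ := par_spec hT hv
  rw [mem_kids]
  exact ⟨h1, by omega⟩

/-- Neighbors of `v`. -/
noncomputable def nbrs (G : SimpleGraph V) (v : V) : Finset V :=
  Finset.univ.filter fun u => G.Adj v u

/-- Vertices at depth `d`. -/
noncomputable def lev (G : SimpleGraph V) (r : V) (d : ℕ) : Finset V :=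
  Finset.univ.filter fun v => G.dist r v = d

section Main

variable (h : ℕ) (hT : G.IsTree)
  (hdepth : ∀ v : V, G.dist r v ≤ h)
  (hchild : ∀ v : V, G.dist r v < h →
        (Finset.univ.filter fun u => G.Adj v u ∧ G.dist r u = G.dist r v + 1).card = 2)

include hT

lemma kids_empty (hdepth : ∀ v : V, G.dist r v ≤ h) {v : V} (hv : G.dist r v = h) :
    kids G r v = ∅ := by
  rw [Finset.eq_empty_iff_forall_notMem]
  intro u hu
  rw [mem_kids] at hu
  have := hdepth u
  omega

lemma nbrs_eq {v : V} :
    nbrs G v = if v = r then kids G r v else insert (par G r v) (kids G r v) := by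
  ext u
  simp only [nbrs, Finset.mem_filter, Finset.mem_univ, true_and]
  split_ifs with hvr
  · rw [mem_kids]
    constructor
    · intro hadj
      refine ⟨hadj, ?_⟩
      have hv0 : G.dist r v = 0 := (dist_zero_iff hT).2 hvr
      rcases adj_dist (r := r) hT hadj with h1 | h1
      · omega
      · omega
    · exact fun h => h.1
  · rw [Finset.mem_insert, mem_kids]
    constructor
    · intro hadj
      rcases adj_dist (r := r) hT hadj with h1 | h1
      · right; exact ⟨hadj, by omega⟩
      · left; exact (par_eq hT ⟨hadj.symm, h1⟩).symm
    · rintro (rfl | ⟨h1, h2⟩)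
      · exact (par_spec hT hvr).1.symm
      · exact h1

lemma par_not_mem_kids {v : V} (hvr : v ≠ r) : par G r v ∉ kids G r v := by
  rw [mem_kids]
  rintro ⟨-, h2⟩
  have := (par_spec hT hvr).2
  omega

lemma nbrs_card_le {v : V} : (nbrs G v).card ≤ (kids G r v).card + 1 := by
  rw [nbrs_eq (r := r) hT]
  split_ifs with hvr
  · omega
  · exact Finset.card_insert_le _ _

lemma closedNbhd_eq {v : V} : closedNbhd G v = insert v (nbrs G v) := by
  ext u
  simp only [closedNbhd, nbrs, Finset.mem_filter, Finset.mem_univ, true_and,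
    Finset.mem_insert]
  constructor
  · rintro (rfl | hadj); · exact Or.inl rfl
    · exact Or.inr hadj.symm
  · rintro (rfl | hadj); · exact Or.inl rfl
    · exact Or.inr hadj.symm

lemma closedNbhd_card_le {v : V} : (closedNbhd G v).card ≤ (kids G r v).card + 2 := by
  rw [closedNbhd_eq hT]
  have h1 := Finset.card_insert_le v (nbrs G v)
  have h2 := nbrs_card_le (G := G) (r := r) (hT := hT) (v := v)
  omega

lemma kids_card (hchild' : ∀ v : V, G.dist r v < h →
      (Finset.univ.filter fun u => G.Adj v u ∧ G.dist r u = G.dist r v + 1).card = 2)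
    {v : V} (hv : G.dist r v < h) : (kids G r v).card = 2 := hchild' v hv

end Main

section Count

variable (hT : G.IsTree)
include hT

lemma lev_zero : lev G r 0 = {r} := by
  ext v
  simp only [lev, Finset.mem_filter, Finset.mem_univ, true_and, Finset.mem_singleton]
  exact dist_zero_iff hT

lemma kids_disj {v w : V} (hvw : v ≠ w) : Disjoint (kids G r v) (kids G r w) := by
  rw [Finset.disjoint_left]
  intro u hu1 hu2
  exact hvw ((par_of_kid hT hu1).symm.trans (par_of_kid hT hu2))

lemma lev_succ (d : ℕ) : lev G r (d+1) = (lev G r d).biUnion (kids G r) := by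
  ext v
  simp only [lev, Finset.mem_filter, Finset.mem_univ, true_and, Finset.mem_biUnion]
  constructor
  · intro hv
    have hvr : v ≠ r := by
      intro hvr; rw [hvr, (dist_zero_iff hT).2 rfl] at hv; omega
    refine ⟨par G r v, ?_, mem_kids_par hT hvr⟩
    have := (par_spec hT hvr).2
    omega
  · rintro ⟨w, hw, hv⟩
    rw [mem_kids] at hv
    omega

lemma lev_card {h : ℕ}
    (hchild : ∀ v : V, G.dist r v < h →
      (Finset.univ.filter fun u => G.Adj v u ∧ G.dist r u = G.dist r v + 1).card = 2)
    {d : ℕ} (hd : d ≤ h) : (lev G r d).card = 2 ^ d := by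
  induction d with
  | zero => rw [lev_zero hT]; simp
  | succ n ih =>
    rw [lev_succ hT, Finset.card_biUnion]
    · have : ∀ v ∈ lev G r n, (kids G r v).card = 2 := by
        intro v hv
        simp only [lev, Finset.mem_filter] at hv
        exact hchild v (by omega)
      rw [Finset.sum_congr rfl this, Finset.sum_const, ih (by omega)]
      ring
    · intro x hx y hy hxy
      exact kids_disj hT hxy

lemma univ_levs {h : ℕ} (hdepth : ∀ v : V, G.dist r v ≤ h) :
    (Finset.univ : Finset V) = (Finset.range (h+1)).biUnion (lev G r) := by
  ext v
  simp only [Finset.mem_univ, true_iff, Finset.mem_biUnion, Finset.mem_range]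
  exact ⟨G.dist r v, by have := hdepth v; omega, by simp [lev]⟩

lemma levs_disj : ∀ d₁ d₂ : ℕ, d₁ ≠ d₂ → Disjoint (lev G r d₁) (lev G r d₂) := by
  intro d₁ d₂ hd
  rw [Finset.disjoint_left]
  intro u h1 h2
  simp only [lev, Finset.mem_filter] at h1 h2
  omega

lemma card_univ_eq {h : ℕ} (hdepth : ∀ v : V, G.dist r v ≤ h)
    (hchild : ∀ v : V, G.dist r v < h →
      (Finset.univ.filter fun u => G.Adj v u ∧ G.dist r u = G.dist r v + 1).card = 2) :
    Fintype.card V = 2 ^ (h+1) - 1 := by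
  rw [← Finset.card_univ, univ_levs hT hdepth, Finset.card_biUnion
    (fun x _ y _ hxy => levs_disj hT x y hxy)]
  have : ∀ d ∈ Finset.range (h+1), (lev G r d).card = 2 ^ d := by
    intro d hd
    exact lev_card hT hchild (by simp at hd; omega)
  rw [Finset.sum_congr rfl this]
  have hs : ∀ n : ℕ, ∑ d ∈ Finset.range n, 2 ^ d = 2 ^ n - 1 := by
    intro n
    induction n with
    | zero => simp
    | succ m ih =>
      rw [Finset.sum_range_succ, ih]
      have : 1 ≤ 2 ^ m := Nat.one_le_two_pow
      have : 2 ^ (m+1) = 2 * 2 ^ m := by ring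
      omega
  exact hs (h+1)

lemma card_S {h : ℕ}
    (hchild : ∀ v : V, G.dist r v < h →
      (Finset.univ.filter fun u => G.Adj v u ∧ G.dist r u = G.dist r v + 1).card = 2) :
    (Finset.univ.filter fun v : V =>
        G.dist r v < h ∧ G.dist r v % 2 = (h-1) % 2).card
      = ∑ d ∈ (Finset.range h).filter (fun d => d % 2 = (h-1) % 2), 2 ^ d := by
  have hset : (Finset.univ.filter fun v : V =>
        G.dist r v < h ∧ G.dist r v % 2 = (h-1) % 2)
      = ((Finset.range h).filter (fun d => d % 2 = (h-1) % 2)).biUnion (lev G r) := by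
    ext v
    simp only [Finset.mem_filter, Finset.mem_univ, true_and, Finset.mem_biUnion,
      Finset.mem_range, lev]
    constructor
    · intro hv
      exact ⟨G.dist r v, ⟨by omega, hv.2⟩, rfl⟩
    · rintro ⟨d, ⟨hd1, hd2⟩, hd3⟩
      omega
  rw [hset, Finset.card_biUnion (fun x _ y _ hxy => levs_disj hT x y hxy)]
  refine Finset.sum_congr rfl fun d hd => ?_
  simp only [Finset.mem_filter, Finset.mem_range] at hd
  exact lev_card hT hchild (by omega)

end Count

section Bounds

variable (hT : G.IsTree)
include hT

lemma quorum_nbr_exists {h : ℕ}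
    (hchild : ∀ v : V, G.dist r v < h →
      (Finset.univ.filter fun u => G.Adj v u ∧ G.dist r u = G.dist r v + 1).card = 2)
    {c : V → ℕ} (hc : IsQuorumColoring G c) {v : V} (hv : G.dist r v < h) :
    ∃ u, G.Adj u v ∧ c u = c v := by
  by_contra hno
  push_neg at hno
  have hsub : (closedNbhd G v).filter (fun u => c u = c v) ⊆ {v} := by
    intro u hu
    simp only [closedNbhd, Finset.mem_filter, Finset.mem_univ, true_and,
      Finset.mem_singleton] at hu ⊢
    rcases hu.1 with rfl | hadj
    · rfl
    · exact absurd hu.2 (hno u hadj)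
  have h1 : ((closedNbhd G v).filter (fun u => c u = c v)).card ≤ 1 := by
    have := Finset.card_le_card hsub
    simpa using this
  have h2 : insert v (kids G r v) ⊆ closedNbhd G v := by
    intro u hu
    simp only [Finset.mem_insert, mem_kids] at hu
    simp only [closedNbhd, Finset.mem_filter, Finset.mem_univ, true_and]
    rcases hu with rfl | ⟨hadj, -⟩
    · exact Or.inl rfl
    · exact Or.inr hadj.symm
  have hvk : v ∉ kids G r v := by
    rw [mem_kids]; rintro ⟨-, hd⟩; omega
  have h3 : 3 ≤ (closedNbhd G v).card := by
    have hcc := Finset.card_le_card h2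
    rw [Finset.card_insert_of_notMem hvk] at hcc
    have hk2 : (kids G r v).card = 2 := hchild v hv
    omega
  have := hc v
  omega

lemma upper_bound {h : ℕ}
    (hchild : ∀ v : V, G.dist r v < h →
      (Finset.univ.filter fun u => G.Adj v u ∧ G.dist r u = G.dist r v + 1).card = 2)
    {c : V → ℕ} (hc : IsQuorumColoring G c) :
    numClasses c +
      (Finset.univ.filter fun v : V =>
        G.dist r v < h ∧ G.dist r v % 2 = (h-1) % 2).card ≤ Fintype.card V := by
  haveI : Nonempty V := ⟨r⟩
  set S : Finset V := Finset.univ.filter fun v : V =>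
      G.dist r v < h ∧ G.dist r v % 2 = (h-1) % 2 with hS
  set rep : ℕ → V := fun k => Classical.epsilon (fun v => c v = k) with hrep
  set f : V → V := fun v => Classical.epsilon (fun u => G.Adj u v ∧ c u = c v) with hf
  have hfs : ∀ s ∈ S, G.Adj (f s) s ∧ c (f s) = c s := by
    intro s hs
    simp only [hS, Finset.mem_filter, Finset.mem_univ, true_and] at hs
    exact Classical.epsilon_spec (quorum_nbr_exists hT hchild hc hs.1)
  have hreps : ∀ x ∈ Finset.univ.image c, c (rep x) = x := by
    intro x hx
    simp only [Finset.mem_image, Finset.mem_univ, true_and] at hx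
    obtain ⟨v, hv⟩ := hx
    exact Classical.epsilon_spec (p := fun v => c v = x) ⟨v, hv⟩
  set g : V → V := fun s => if rep (c s) = s then f s else s with hg
  set R : Finset V := (Finset.univ.image c).image rep with hR
  set T : Finset V := S.image g with hTdef
  have hSnadj : ∀ s ∈ S, ∀ s' ∈ S, ¬ G.Adj s s' := by
    intro s hs s' hs' hadj
    simp only [hS, Finset.mem_filter, Finset.mem_univ, true_and] at hs hs'
    rcases adj_dist (r := r) hT hadj with h1 | h1 <;> omega
  have hcardR : R.card = numClasses c := by
    rw [hR, numClasses]
    apply Finset.card_image_of_injOn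
    intro x hx y hy hxy
    rw [← hreps x hx, ← hreps y hy, hxy]
  have hcardT : T.card = S.card := by
    rw [hTdef]
    apply Finset.card_image_of_injOn
    intro s hs s' hs'
    replace hs : s ∈ S := hs
    replace hs' : s' ∈ S := hs'
    intro hss
    simp only [hg] at hss
    split_ifs at hss with h1 h2 h2
    · -- f s = f s'
      have e1 := (hfs s hs).2
      have e2 := (hfs s' hs').2
      have hcc : c s = c s' := by rw [← e1, hss, e2]
      rw [← h1, hcc, h2]
    · -- f s = s'
      exfalso
      have hadj : G.Adj (f s) s := (hfs s hs).1
      rw [hss] at hadj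
      exact hSnadj s' hs' s hs hadj
    · -- s = f s'
      exfalso
      have hadj : G.Adj (f s') s' := (hfs s' hs').1
      rw [← hss] at hadj
      exact hSnadj s hs s' hs' hadj
    · exact hss
  have hdisj : Disjoint R T := by
    rw [Finset.disjoint_left]
    intro x hxR hxT
    have hxrep : rep (c x) = x := by
      rw [hR] at hxR
      simp only [Finset.mem_image] at hxR
      obtain ⟨k, hk, rfl⟩ := hxR
      rw [hreps k (Finset.mem_image.mpr hk)]
    rw [hTdef] at hxT
    simp only [Finset.mem_image] at hxT
    obtain ⟨s, hs, hgs⟩ := hxT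
    simp only [hg] at hgs
    split_ifs at hgs with h1
    · -- x = f s, rep (c s) = s
      have e1 := (hfs s hs).2
      rw [hgs] at e1
      have : rep (c x) = s := by rw [e1, h1]
      have hxs : x = s := by rw [← hxrep, this]
      have hadj : G.Adj (f s) s := (hfs s hs).1
      rw [hgs, hxs] at hadj
      exact G.irrefl hadj
    · rw [hgs] at h1
      exact h1 hxrep
  have hle : R.card + T.card ≤ Fintype.card V := by
    rw [← Finset.card_union_of_disjoint hdisj, ← Finset.card_univ]
    exact Finset.card_le_univ _
  omega

end Bounds

/-- A chosen child of `v` (junk if `v` has no children). -/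
noncomputable def lc (G : SimpleGraph V) (r v : V) : V :=
  if hv : (kids G r v).Nonempty then hv.choose else v

lemma lc_mem {v : V} (hv : (kids G r v).Nonempty) : lc G r v ∈ kids G r v := by
  rw [lc, dif_pos hv]
  exact hv.choose_spec

/-- Auxiliary state function (fueled recursion down from the root). -/
noncomputable def stateF (G : SimpleGraph V) (r : V) : ℕ → V → Bool
  | 0, _ => true
  | n+1, v =>
    if v = r then true
    else if stateF G r n (par G r v) = true ∧ v = lc G r (par G r v) then false else true

/-- The state of a vertex: `true` = class leader, `false` = absorbed into parent's class. -/
noncomputable def state (G : SimpleGraph V) (r v : V) : Bool :=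
  stateF G r (G.dist r v) v

section LB

variable (hT : G.IsTree)
include hT

lemma state_root : state G r r = true := by
  have h0 : G.dist r r = 0 := SimpleGraph.dist_self
  rw [state, h0, stateF]

lemma state_false_spec {v : V} (hs : state G r v = false) :
    v ≠ r ∧ state G r (par G r v) = true ∧ v = lc G r (par G r v) := by
  have hvr : v ≠ r := by
    intro hvr; rw [hvr, state_root hT] at hs; exact Bool.noConfusion hs
  have hd : G.dist r v ≠ 0 := fun h0 => hvr ((dist_zero_iff hT).1 h0)
  obtain ⟨d, hd'⟩ : ∃ d, G.dist r v = d + 1 := ⟨G.dist r v - 1, by omega⟩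
  have hpar : G.dist r (par G r v) = d := by
    have := (par_spec hT hvr).2; omega
  rw [state, hd', stateF, if_neg hvr] at hs
  have hcond : stateF G r d (par G r v) = true ∧ v = lc G r (par G r v) := by
    by_contra hc
    rw [if_neg hc] at hs
    exact Bool.noConfusion hs
  have hstate : state G r (par G r v) = true := by
    show stateF G r (G.dist r (par G r v)) (par G r v) = true
    rw [hpar]; exact hcond.1
  exact ⟨hvr, hstate, hcond.2⟩

lemma state_lc_false {v : V} (hv : state G r v = true) (hne : (kids G r v).Nonempty) :
    state G r (lc G r v) = false ∧ par G r (lc G r v) = v := by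
  have hmem := lc_mem (G := G) (r := r) hne
  have hpar : par G r (lc G r v) = v := par_of_kid hT hmem
  have hdist : G.dist r (lc G r v) = G.dist r v + 1 := (mem_kids.1 hmem).2
  have hlcr : lc G r v ≠ r := by
    intro hlr
    rw [hlr, (dist_zero_iff hT).2 rfl] at hdist
    omega
  refine ⟨?_, hpar⟩
  rw [state, hdist, stateF, if_neg hlcr, hpar]
  rw [if_pos ⟨(by exact hv : stateF G r (G.dist r v) v = true), rfl⟩]

lemma kids_card_le {h : ℕ} (hdepth : ∀ v : V, G.dist r v ≤ h)
    (hchild : ∀ v : V, G.dist r v < h →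
      (Finset.univ.filter fun u => G.Adj v u ∧ G.dist r u = G.dist r v + 1).card = 2)
    (v : V) : (kids G r v).card ≤ 2 := by
  rcases Nat.lt_or_ge (G.dist r v) h with hv | hv
  · have : (kids G r v).card = 2 := hchild v hv
    omega
  · have hEq : G.dist r v = h := le_antisymm (hdepth v) hv
    rw [kids_empty (h := h) hT hdepth hEq]
    simp

lemma lower_bound {h : ℕ} (hdepth : ∀ v : V, G.dist r v ≤ h)
    (hchild : ∀ v : V, G.dist r v < h →
      (Finset.univ.filter fun u => G.Adj v u ∧ G.dist r u = G.dist r v + 1).card = 2) :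
    ∃ c : V → ℕ, IsQuorumColoring G c ∧
      numClasses c +
        (Finset.univ.filter fun v : V =>
          G.dist r v < h ∧ G.dist r v % 2 = (h-1) % 2).card = Fintype.card V := by
  haveI : Nonempty V := ⟨r⟩
  set idx : V → ℕ := fun v => ((Fintype.equivFin V) v : ℕ) with hidxdef
  have hidx : Function.Injective idx :=
    Fin.val_injective.comp (Fintype.equivFin V).injective
  set c0 : V → ℕ := fun v => if state G r v = false then idx (par G r v) else idx v
    with hc0
  have hc0C : ∀ v, state G r v = true → c0 v = idx v := by
    intro v hv
    simp only [hc0, hv]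
    simp
  have hc0U : ∀ v, state G r v = false → c0 v = idx (par G r v) := by
    intro v hv
    simp only [hc0, hv]
    simp
  have hNle : ∀ v : V, (closedNbhd G v).card ≤ 4 := by
    intro v
    have h1 := closedNbhd_card_le (r := r) hT (v := v)
    have h2 := kids_card_le hT hdepth hchild v
    omega
  have hmemN : ∀ v : V, v ∈ closedNbhd G v := by
    intro v
    simp [closedNbhd]
  have hmemN' : ∀ v w : V, G.Adj w v → w ∈ closedNbhd G v := by
    intro v w hadj
    simp only [closedNbhd, Finset.mem_filter, Finset.mem_univ, true_and]
    exact Or.inr hadj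
  have hpair : ∀ v w : V, G.Adj w v → c0 w = c0 v →
      2 ≤ ((closedNbhd G v).filter fun u => c0 u = c0 v).card := by
    intro v w hadj hcw
    have hsub : ({v, w} : Finset V) ⊆ (closedNbhd G v).filter fun u => c0 u = c0 v := by
      intro u hu
      rcases Finset.mem_insert.1 hu with rfl | hu
      · exact Finset.mem_filter.mpr ⟨hmemN u, rfl⟩
      · rw [Finset.mem_singleton] at hu
        subst hu
        exact Finset.mem_filter.mpr ⟨hmemN' v u hadj, hcw⟩
    have hcard : ({v, w} : Finset V).card = 2 := by
      rw [Finset.card_insert_of_notMem (by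
        rw [Finset.mem_singleton]; exact fun hvw => G.ne_of_adj hadj hvw.symm),
        Finset.card_singleton]
    have := Finset.card_le_card hsub
    omega
  refine ⟨c0, ?_, ?_⟩
  · -- quorum
    intro v
    cases hb : state G r v with
    | false =>
      obtain ⟨hvr, hspar, -⟩ := state_false_spec hT hb
      have hadj : G.Adj (par G r v) v := (par_spec hT hvr).1
      have hcw : c0 (par G r v) = c0 v := by
        rw [hc0C _ hspar, hc0U _ hb]
      have := hpair v (par G r v) hadj hcw
      have := hNle v
      omega
    | true =>
      rcases Nat.lt_or_ge (G.dist r v) h with hv | hv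
      · have hne : (kids G r v).Nonempty := by
          rw [← Finset.card_pos]
          have : (kids G r v).card = 2 := hchild v hv
          omega
        obtain ⟨hslc, hparlc⟩ := state_lc_false hT hb hne
        have hadj : G.Adj (lc G r v) v := (mem_kids.1 (lc_mem hne)).1.symm
        have hcw : c0 (lc G r v) = c0 v := by
          rw [hc0U _ hslc, hparlc, hc0C _ hb]
        have := hpair v (lc G r v) hadj hcw
        have := hNle v
        omega
      · -- leaf
        have hEq : G.dist r v = h := le_antisymm (hdepth v) hv
        have hk : kids G r v = ∅ := kids_empty (h := h) hT hdepth hEq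
        have h1 := closedNbhd_card_le (r := r) hT (v := v)
        rw [hk] at h1
        simp only [Finset.card_empty] at h1
        have h2 : 0 < ((closedNbhd G v).filter fun u => c0 u = c0 v).card :=
          Finset.card_pos.mpr ⟨v, Finset.mem_filter.mpr ⟨hmemN v, rfl⟩⟩
        omega
  · -- class count
    set Cset := Finset.univ.filter (fun v : V => state G r v = true) with hCset
    set Uset := Finset.univ.filter (fun v : V => state G r v = false) with hUset
    have himg : Finset.univ.image c0 = Cset.image idx := by
      ext k
      simp only [Finset.mem_image, Finset.mem_univ, true_and, hCset, Finset.mem_filter]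
      constructor
      · rintro ⟨v, rfl⟩
        rcases Bool.eq_false_or_eq_true (state G r v) with hb | hb
        · exact ⟨v, hb, (hc0C v hb).symm⟩
        · exact ⟨par G r v, (state_false_spec hT hb).2.1, (hc0U v hb).symm⟩
      · rintro ⟨x, hx, rfl⟩
        exact ⟨x, hc0C x hx⟩
    have hnum : numClasses c0 = Cset.card := by
      rw [numClasses, himg, Finset.card_image_of_injOn (hidx.injOn)]
    have hCU : Cset.card + Uset.card = Fintype.card V := by
      have hcompl : Uset = Finset.univ.filter (fun v : V => ¬ state G r v = true) := by
        ext x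
        simp [hUset]
      rw [hcompl, hCset, ← Finset.card_univ]
      exact Finset.card_filter_add_card_filter_not _
    have hUS : Uset.card = (Finset.univ.filter fun v : V =>
        G.dist r v < h ∧ G.dist r v % 2 = (h-1) % 2).card := by
      apply Finset.card_bij (fun u _ =>
        if G.dist r u < h ∧ G.dist r u % 2 = (h-1) % 2 then u else par G r u)
      · -- maps into S
        intro u hu
        have hus : state G r u = false := (Finset.mem_filter.1 hu).2
        obtain ⟨hur, hspar, hulc⟩ := state_false_spec hT hus
        have hd1 : G.dist r (par G r u) + 1 = G.dist r u := (par_spec hT hur).2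
        have hdu : G.dist r u ≤ h := hdepth u
        have hd0 : G.dist r u ≠ 0 := fun h0 => hur ((dist_zero_iff hT).1 h0)
        split_ifs with hcond
        · exact Finset.mem_filter.mpr ⟨Finset.mem_univ _, hcond⟩
        · refine Finset.mem_filter.mpr ⟨Finset.mem_univ _, ?_⟩
          omega
      · -- injective
        intro u1 hu1 u2 hu2 heq
        have hs1 : state G r u1 = false := (Finset.mem_filter.1 hu1).2
        have hs2 : state G r u2 = false := (Finset.mem_filter.1 hu2).2
        obtain ⟨hr1, hp1, hl1⟩ := state_false_spec hT hs1
        obtain ⟨hr2, hp2, hl2⟩ := state_false_spec hT hs2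
        split_ifs at heq with h1 h2 h2
        · exact heq
        · exfalso
          rw [heq] at hs1
          rw [hs1] at hp2
          exact Bool.noConfusion hp2
        · exfalso
          rw [← heq] at hs2
          rw [hs2] at hp1
          exact Bool.noConfusion hp1
        · rw [hl1, heq, ← hl2]
      · -- surjective
        intro t ht
        have htS := (Finset.mem_filter.1 ht).2
        rcases Bool.eq_false_or_eq_true (state G r t) with hb | hb
        · have hne : (kids G r t).Nonempty := by
            rw [← Finset.card_pos]
            have : (kids G r t).card = 2 := hchild t htS.1
            omega
          obtain ⟨hslc, hparlc⟩ := state_lc_false hT hb hne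
          refine ⟨lc G r t, Finset.mem_filter.mpr ⟨Finset.mem_univ _, hslc⟩, ?_⟩
          have hdlc : G.dist r (lc G r t) = G.dist r t + 1 := (mem_kids.1 (lc_mem hne)).2
          rw [if_neg (by omega), hparlc]
        · exact ⟨t, Finset.mem_filter.mpr ⟨Finset.mem_univ _, hb⟩, by rw [if_pos htS]⟩
    rw [hnum, ← hUS]
    exact hCU

end LB

end Tree

lemma arith_sum : ∀ h : ℕ,
    3 * (∑ d ∈ Finset.range h, if d % 2 = (h-1) % 2 then 2^d else 0)
      = 2^(h+1) - 2^((h+1) % 2) := by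
  intro h
  induction h using Nat.strong_induction_on with
  | _ h ih =>
    match h with
    | 0 => simp
    | 1 =>
      rw [Finset.sum_range_succ, Finset.sum_range_zero]
      norm_num
    | (k+2) =>
      have hrec := ih k (by omega)
      rw [Finset.sum_range_succ, Finset.sum_range_succ]
      have h1 : (k+1) % 2 = (k+2-1) % 2 := by omega
      have h2 : ¬ (k % 2 = (k+2-1) % 2) := by omega
      rw [if_pos h1, if_neg h2]
      have hsum : (∑ d ∈ Finset.range k, if d % 2 = (k+2-1) % 2 then 2^d else 0)
          = ∑ d ∈ Finset.range k, if d % 2 = (k-1) % 2 then 2^d else 0 := by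
        apply Finset.sum_congr rfl
        intro d hd
        rw [Finset.mem_range] at hd
        have : (d % 2 = (k+2-1) % 2) ↔ (d % 2 = (k-1) % 2) := by omega
        simp only [this]
      rw [hsum]
      have hmod : (k+2+1) % 2 = (k+1) % 2 := by omega
      rw [hmod]
      generalize hA : (∑ d ∈ Finset.range k, if d % 2 = (k-1) % 2 then 2^d else 0) = A at hrec
      have hp1 : 2^(k+2+1) = 4 * 2^(k+1) := by ring
      have hp2 : 2^((k+1) % 2) ≤ 2^(k+1) := Nat.pow_le_pow_right (by omega) (by omega)
      omega

/-- for a perfect binary tree of height `h`,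
`ψ_q(T) = (2^{h+2}/3) · (1 − (1/4)^{⌊h/2⌋+1})`. -/
theorem quorumNumber_perfect_binary_tree {V : Type*} [Fintype V] (G : SimpleGraph V)
    (r : V) (h : ℕ) (hT : G.IsTree)
    (hdepth : ∀ v : V, G.dist r v ≤ h)
    (hchild : ∀ v : V, G.dist r v < h →
        (Finset.univ.filter fun u => G.Adj v u ∧ G.dist r u = G.dist r v + 1).card = 2) :
    (quorumNumber G : ℚ) = 2 ^ (h + 2) / 3 * (1 - (1 / 4 : ℚ) ^ (h / 2 + 1)) := by
  set Sc := (Finset.univ.filter fun v : V =>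
      G.dist r v < h ∧ G.dist r v % 2 = (h-1) % 2).card with hScdef
  obtain ⟨c, hcq, hcn⟩ := lower_bound hT hdepth hchild
  have hn : Fintype.card V = 2^(h+1) - 1 := card_univ_eq hT hdepth hchild
  have hS3 : 3 * Sc = 2^(h+1) - 2^((h+1) % 2) := by
    rw [hScdef, card_S hT hchild, Finset.sum_filter]
    exact arith_sum h
  have hq : quorumNumber G = Fintype.card V - Sc := by
    apply le_antisymm
    · apply csSup_le
      · exact ⟨numClasses c, c, hcq, rfl⟩
      · rintro k ⟨c', hc'q, rfl⟩
        have := upper_bound hT hchild hc'q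
        omega
    · apply le_csSup
      · refine ⟨Fintype.card V, ?_⟩
        rintro k ⟨c', -, rfl⟩
        exact le_trans Finset.card_image_le (le_of_eq Finset.card_univ)
      · exact ⟨c, hcq, by omega⟩
  have hScle : Sc ≤ Fintype.card V := by omega
  rw [hq, Nat.cast_sub hScle]
  have h2le : (2:ℕ)^((h+1) % 2) ≤ 2^(h+1) := Nat.pow_le_pow_right (by omega) (by omega)
  have hnQ : (Fintype.card V : ℚ) = 2^(h+1) - 1 := by
    rw [hn, Nat.cast_sub Nat.one_le_two_pow]
    push_cast
    ring
  have hS3Q : 3 * (Sc:ℚ) = 2^(h+1) - 2^((h+1) % 2) := by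
    have hc := congrArg (Nat.cast : ℕ → ℚ) hS3
    rw [Nat.cast_sub h2le] at hc
    push_cast at hc
    linarith
  rcases Nat.even_or_odd h with he | ho
  · obtain ⟨k, hk⟩ := he
    subst hk
    rw [show (k+k)/2 = k by omega]
    rw [show (k+k+1) % 2 = 1 by omega] at hS3Q
    have hinv : ((1:ℚ)/4)^(k+1) = 1/4^(k+1) := by
      rw [div_pow]; norm_num
    rw [hinv, hnQ]
    have hkey : (2:ℚ)^(k+k+2) * (1/4^(k+1)) = 1 := by
      rw [show (4:ℚ) = 2^2 by norm_num, ← pow_mul]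
      rw [show 2*(k+1) = k+k+2 by ring]
      field_simp
    have hB : (2:ℚ)^(k+k+2) = 2*2^(k+k+1) := by ring
    linear_combination (-1/3 : ℚ) * hS3Q + (1/3 : ℚ) * hkey - (1/3 : ℚ) * hB
  · obtain ⟨k, hk⟩ := ho
    subst hk
    rw [show (2*k+1)/2 = k by omega]
    rw [show (2*k+1+1) % 2 = 0 by omega] at hS3Q
    have hinv : ((1:ℚ)/4)^(k+1) = 1/4^(k+1) := by
      rw [div_pow]; norm_num
    rw [hinv, hnQ]
    have hkey : (2:ℚ)^(2*k+1+2) * (1/4^(k+1)) = 2 := by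
      rw [show (4:ℚ) = 2^2 by norm_num, ← pow_mul]
      rw [show (2:ℚ)^(2*k+1+2) = 2 * 2^(2*(k+1)) by ring]
      field_simp
    have hB : (2:ℚ)^(2*k+1+2) = 2*2^(2*k+1+1) := by ring
    linear_combination (-1/3 : ℚ) * hS3Q + (1/3 : ℚ) * hkey - (1/3 : ℚ) * hB
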